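/- There exists a constant C>0 such that for every smooth function u on ℝ^{1+2} vanishing outside the cone K and every point of K: for all α,β ∈ {0,1,2}, |∂_α∂_β u| ≤ C ( |∂_t∂_t u| + Σ_{a∈{1,2}, β'∈{0,1,2}} |∂̲_a(∂_{β'} u)| + t^{−1} Σ_{γ∈{0,1,2}} |∂_γ u| ). -/
import Mathlib


open scoped BigOperators ContDiff
open MeasureTheory Set

noncomputable section

/-- Partial derivative `∂_μ` on `ℝ^{1+2}` (coordinates `(t,x¹,x²) = (p 0, p 1, p 2)`). -/
def pd (μ : Fin 3) (φ : (Fin 3 → ℝ) → ℝ) : (Fin 3 → ℝ) → ℝ :=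
  fun p => fderiv ℝ φ p (Pi.single μ 1)

/-- Semi-hyperboloidal frame: `∂̲_0 = ∂_t`, `∂̲_a = (x^a/t)∂_t + ∂_a` for `a = 1,2`. -/
def upd (α : Fin 3) (φ : (Fin 3 → ℝ) → ℝ) : (Fin 3 → ℝ) → ℝ :=
  fun p => if α = 0 then pd 0 φ p else (p α / p 0) * pd 0 φ p + pd α φ p

/-- Admissible vector fields: `∂_0, ∂_1, ∂_2, L_1, L_2` where `L_a = x^a ∂_t + t ∂_a`. -/
def Zop (z : Fin 5) (φ : (Fin 3 → ℝ) → ℝ) : (Fin 3 → ℝ) → ℝ := fun p =>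
  if z = 0 then pd 0 φ p
  else if z = 1 then pd 1 φ p
  else if z = 2 then pd 2 φ p
  else if z = 3 then p 1 * pd 0 φ p + p 0 * pd 1 φ p
  else p 2 * pd 0 φ p + p 0 * pd 2 φ p

/-- Composition `Z^I` of admissible vector fields; `|I|` is the length of the list. -/
def Zcomp : List (Fin 5) → ((Fin 3 → ℝ) → ℝ) → (Fin 3 → ℝ) → ℝ
  | [], φ => φ
  | z :: l, φ => Zop z (Zcomp l φ)

/-- Composition `∂^I` of coordinate partial derivatives. -/
def pdComp : List (Fin 3) → ((Fin 3 → ℝ) → ℝ) → (Fin 3 → ℝ) → ℝ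
  | [], φ => φ
  | μ :: l, φ => pd μ (pdComp l φ)

/-- `r = |x|`. -/
def rad (p : Fin 3 → ℝ) : ℝ := Real.sqrt ((p 1) ^ 2 + (p 2) ^ 2)

/-- The interior of the light cone, `K = {r < t - 1}`. -/
def inK (p : Fin 3 → ℝ) : Prop := rad p < p 0 - 1

/-- `s = √(t² - r²)`. -/
def sv (p : Fin 3 → ℝ) : ℝ := Real.sqrt ((p 0) ^ 2 - (p 1) ^ 2 - (p 2) ^ 2)

/-- The point of the hyperboloid `H_s` lying above `x ∈ ℝ²`. -/
def hyp (s : ℝ) (x : Fin 2 → ℝ) : Fin 3 → ℝ :=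
  ![Real.sqrt (s ^ 2 + (x 0) ^ 2 + (x 1) ^ 2), x 0, x 1]

/-- Membership in the hyperboloid `H_s = {t² - r² = s², t > 0}`. -/
def onH (s : ℝ) (p : Fin 3 → ℝ) : Prop :=
  (p 0) ^ 2 - (p 1) ^ 2 - (p 2) ^ 2 = s ^ 2 ∧ 0 < p 0

/-- Hyperboloidal energy `E_0(s,φ)`. -/
def E0 (s : ℝ) (φ : (Fin 3 → ℝ) → ℝ) : ℝ :=
  ∫ x : Fin 2 → ℝ,
    ((upd 1 φ (hyp s x)) ^ 2 + (upd 2 φ (hyp s x)) ^ 2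
      + ((s / hyp s x 0) * pd 0 φ (hyp s x)) ^ 2)

/-- Sum of `F(I)` over all compositions `I` of at most `N` admissible vector fields. -/
def singleSum (N : ℕ) (F : List (Fin 5) → ℝ) : ℝ :=
  ∑ j ∈ Finset.range (N + 1), ∑ I : Fin j → Fin 5, F (List.ofFn I)

/-- Hyperboloidal energy `E_m(s,φ) = Σ_{|I| ≤ m} E_0(s, Z^I φ)`. -/
def Em (m : ℕ) (s : ℝ) (φ : (Fin 3 → ℝ) → ℝ) : ℝ :=
  singleSum m (fun I => E0 s (Zcomp I φ))

/-- Minkowski metric `diag(-1,1,1)` (upper and lower components agree). -/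
def eta (μ ν : Fin 3) : ℝ := if μ = ν then (if μ = (0 : Fin 3) then -1 else 1) else 0

/-- `L²(H_s)` norm. -/
def L2Hs (s : ℝ) (u : (Fin 3 → ℝ) → ℝ) : ℝ :=
  Real.sqrt (∫ x : Fin 2 → ℝ, (u (hyp s x)) ^ 2)

/-- Sum of `F(I₁,I₂,I₃)` over all triples of compositions with `|I₁|+|I₂|+|I₃| ≤ N`. -/
def tripleSum (N : ℕ) (F : List (Fin 5) → List (Fin 5) → List (Fin 5) → ℝ) : ℝ :=
  ∑ j₁ ∈ Finset.range (N + 1), ∑ j₂ ∈ Finset.range (N + 1), ∑ j₃ ∈ Finset.range (N + 1),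
    if j₁ + j₂ + j₃ ≤ N then
      ∑ I₁ : Fin j₁ → Fin 5, ∑ I₂ : Fin j₂ → Fin 5, ∑ I₃ : Fin j₃ → Fin 5,
        F (List.ofFn I₁) (List.ofFn I₂) (List.ofFn I₃)
    else 0

lemma pd_eq_second (u : (Fin 3 → ℝ) → ℝ) (hu : ContDiff ℝ ∞ u) (μ ν : Fin 3) (p : Fin 3 → ℝ) :
    pd μ (pd ν u) p = fderiv ℝ (fderiv ℝ u) p (Pi.single μ 1) (Pi.single ν 1) := by
  have hf : ContDiff ℝ ∞ (fderiv ℝ u) := hu.fderiv_right (by simp)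
  have hd : DifferentiableAt ℝ (fderiv ℝ u) p := hf.differentiable (by simp) p
  have : pd ν u = fun q => (fderiv ℝ u q) (Pi.single ν 1) := rfl
  rw [pd, this, fderiv_clm_apply hd (differentiableAt_const _)]
  simp

lemma pd_comm (u : (Fin 3 → ℝ) → ℝ) (hu : ContDiff ℝ ∞ u) (μ ν : Fin 3) (p : Fin 3 → ℝ) :
    pd μ (pd ν u) p = pd ν (pd μ u) p := by
  rw [pd_eq_second u hu, pd_eq_second u hu]
  have hf : ContDiff ℝ ∞ (fderiv ℝ u) := hu.fderiv_right (by simp)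
  exact second_derivative_symmetric
    (fun y => (hu.differentiable (by simp) y).hasFDerivAt)
    ((hf.differentiable (by simp) p).hasFDerivAt) _ _

/-- control of second-order derivatives inside the cone. -/
theorem second_derivative_bound :
    ∃ C > (0 : ℝ), ∀ u : (Fin 3 → ℝ) → ℝ, ContDiff ℝ ∞ u →
      (∀ p, ¬ inK p → u p = 0) →
      ∀ p : Fin 3 → ℝ, inK p → ∀ α β : Fin 3,
        |pd α (pd β u) p| ≤
          C * (|pd 0 (pd 0 u) p|
            + (∑ a ∈ ({1, 2} : Finset (Fin 3)), ∑ β' : Fin 3, |upd a (pd β' u) p|)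
            + (p 0)⁻¹ * ∑ γ' : Fin 3, |pd γ' u p|) := by
  
  refine ⟨1, one_pos, fun u hu _ p hp α β => ?_⟩
  have hrad : 0 ≤ rad p := Real.sqrt_nonneg _
  have ht : 1 < p 0 := by have := hp; unfold inK at this; linarith
  have ht0 : 0 < p 0 := by linarith
  -- |p a| ≤ rad p for a = 1, 2
  have hcoord : ∀ a : Fin 3, a = 1 ∨ a = 2 → |p a| ≤ rad p := by
    rintro a (rfl | rfl) <;>
    · rw [← Real.sqrt_sq_eq_abs]
      exact Real.sqrt_le_sqrt (by nlinarith [sq_nonneg (p 1), sq_nonneg (p 2)])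
  have hfrac : ∀ a : Fin 3, a = 1 ∨ a = 2 → |p a / p 0| ≤ 1 := by
    intro a ha
    rw [abs_div, abs_of_pos ht0, div_le_one ht0]
    have := hcoord a ha
    unfold inK at hp; linarith
  -- key pointwise bound
  have habs : ∀ a : Fin 3, a = 1 ∨ a = 2 → ∀ φ : (Fin 3 → ℝ) → ℝ,
      |pd a φ p| ≤ |upd a φ p| + |pd 0 φ p| := by
    intro a ha φ
    have hane : a ≠ 0 := by rcases ha with rfl | rfl <;> decide
    have heq : pd a φ p = upd a φ p - (p a / p 0) * pd 0 φ p := by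
      simp [upd, hane]
    rw [heq]
    calc |upd a φ p - (p a / p 0) * pd 0 φ p|
        ≤ |upd a φ p| + |(p a / p 0) * pd 0 φ p| := abs_sub _ _
      _ ≤ |upd a φ p| + |pd 0 φ p| := by
          rw [abs_mul]
          have := hfrac a ha
          nlinarith [abs_nonneg (pd 0 φ p)]
  have hQ : 0 ≤ (p 0)⁻¹ * ∑ γ' : Fin 3, |pd γ' u p| :=
    mul_nonneg (inv_nonneg.2 ht0.le) (Finset.sum_nonneg fun _ _ => abs_nonneg _)
  have hS : (∑ a ∈ ({1, 2} : Finset (Fin 3)), ∑ β' : Fin 3, |upd a (pd β' u) p|)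
      = (|upd 1 (pd 0 u) p| + |upd 1 (pd 1 u) p| + |upd 1 (pd 2 u) p|)
        + (|upd 2 (pd 0 u) p| + |upd 2 (pd 1 u) p| + |upd 2 (pd 2 u) p|) := by
    rw [Finset.sum_pair (by decide : (1 : Fin 3) ≠ 2)]
    simp [Fin.sum_univ_three]
  rw [one_mul, hS]
  have hb0 : ∀ b : Fin 3, b = 1 ∨ b = 2 →
      |pd 0 (pd b u) p| ≤ |upd b (pd 0 u) p| + |pd 0 (pd 0 u) p| := by
    intro b hb
    rw [pd_comm u hu 0 b p]
    exact habs b hb (pd 0 u)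
  fin_cases α <;> fin_cases β
  · show |pd 0 (pd 0 u) p| ≤ _
    nlinarith [abs_nonneg (upd 1 (pd 0 u) p), abs_nonneg (upd 1 (pd 1 u) p),
      abs_nonneg (upd 1 (pd 2 u) p), abs_nonneg (upd 2 (pd 0 u) p),
      abs_nonneg (upd 2 (pd 1 u) p), abs_nonneg (upd 2 (pd 2 u) p)]
  · show |pd 0 (pd 1 u) p| ≤ _
    have := hb0 1 (Or.inl rfl)
    nlinarith [abs_nonneg (upd 1 (pd 1 u) p), abs_nonneg (upd 1 (pd 2 u) p),
      abs_nonneg (upd 2 (pd 0 u) p), abs_nonneg (upd 2 (pd 1 u) p),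
      abs_nonneg (upd 2 (pd 2 u) p)]
  · show |pd 0 (pd 2 u) p| ≤ _
    have := hb0 2 (Or.inr rfl)
    nlinarith [abs_nonneg (upd 1 (pd 0 u) p), abs_nonneg (upd 1 (pd 1 u) p),
      abs_nonneg (upd 1 (pd 2 u) p), abs_nonneg (upd 2 (pd 1 u) p),
      abs_nonneg (upd 2 (pd 2 u) p)]
  · show |pd 1 (pd 0 u) p| ≤ _
    have h1 := habs 1 (Or.inl rfl) (pd 0 u)
    nlinarith [abs_nonneg (upd 1 (pd 1 u) p), abs_nonneg (upd 1 (pd 2 u) p),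
      abs_nonneg (upd 2 (pd 0 u) p), abs_nonneg (upd 2 (pd 1 u) p),
      abs_nonneg (upd 2 (pd 2 u) p)]
  · show |pd 1 (pd 1 u) p| ≤ _
    have h1 := habs 1 (Or.inl rfl) (pd 1 u)
    have h2 := hb0 1 (Or.inl rfl)
    nlinarith [abs_nonneg (upd 1 (pd 2 u) p), abs_nonneg (upd 2 (pd 0 u) p),
      abs_nonneg (upd 2 (pd 1 u) p), abs_nonneg (upd 2 (pd 2 u) p)]
  · show |pd 1 (pd 2 u) p| ≤ _
    have h1 := habs 1 (Or.inl rfl) (pd 2 u)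
    have h2 := hb0 2 (Or.inr rfl)
    nlinarith [abs_nonneg (upd 1 (pd 0 u) p), abs_nonneg (upd 1 (pd 1 u) p),
      abs_nonneg (upd 2 (pd 1 u) p), abs_nonneg (upd 2 (pd 2 u) p)]
  · show |pd 2 (pd 0 u) p| ≤ _
    have h1 := habs 2 (Or.inr rfl) (pd 0 u)
    nlinarith [abs_nonneg (upd 1 (pd 0 u) p), abs_nonneg (upd 1 (pd 1 u) p),
      abs_nonneg (upd 1 (pd 2 u) p), abs_nonneg (upd 2 (pd 1 u) p),
      abs_nonneg (upd 2 (pd 2 u) p)]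
  · show |pd 2 (pd 1 u) p| ≤ _
    have h1 := habs 2 (Or.inr rfl) (pd 1 u)
    have h2 := hb0 1 (Or.inl rfl)
    nlinarith [abs_nonneg (upd 1 (pd 1 u) p), abs_nonneg (upd 1 (pd 2 u) p),
      abs_nonneg (upd 2 (pd 0 u) p), abs_nonneg (upd 2 (pd 2 u) p)]
  · show |pd 2 (pd 2 u) p| ≤ _
    have h1 := habs 2 (Or.inr rfl) (pd 2 u)
    have h2 := hb0 2 (Or.inr rfl)
    nlinarith [abs_nonneg (upd 1 (pd 0 u) p), abs_nonneg (upd 1 (pd 1 u) p),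
      abs_nonneg (upd 1 (pd 2 u) p), abs_nonneg (upd 2 (pd 1 u) p)]
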